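/- Access control completeness: if system M is ta^◇-secure with respect to dynamic policy ↣, then unfold(M) admits an access control interpretation (choices of O, V, contents, observe, alter) satisfying DRM-1 through DRM-6 with respect to ↣. Moreover if M is ta^□-secure with respect to ↣, there exists a local policy ↣' ≤ ↣ such that unfold(M) admits an access control interpretation consistent with ↣' additionally satisfying DRM-5'. -/

import Mathlib

open Classical

/-- Binary trees over actions, values of the `ta` purge functions. -/
inductive TATree (A : Type) : Type where
  | eps : TATree A
  | node : TATree A → TATree A → A → TATree A

/-- Run a deterministic system along a trace (newest action at the head of the list). -/
def runL {S A : Type} (step : S → A → S) (s0 : S) : List A → S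
  | [] => s0
  | a :: α => step (runL step s0 α) a

/-- The permissive purge function `ta^◇` for a dynamic policy `P`. -/
noncomputable def taD {D A : Type} (dm : A → D) (P : List A → D → D → Prop) :
    List A → D → TATree A
  | [], _ => TATree.eps
  | a :: α, u =>
    if P α (dm a) u then TATree.node (taD dm P α u) (taD dm P α (dm a)) a
    else taD dm P α u

/-- The unwinding relations: smallest family of equivalence relations on traces
satisfying WSC and DLR with respect to the dynamic policy `P`. -/
inductive Unw {D A : Type} (dm : A → D) (P : List A → D → D → Prop) :
    D → List A → List A → Prop where
  | refl (u : D) (α : List A) : Unw dm P u α α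
  | symm {u : D} {α β : List A} : Unw dm P u α β → Unw dm P u β α
  | trans {u : D} {α β γ : List A} : Unw dm P u α β → Unw dm P u β γ → Unw dm P u α γ
  | dlr (u : D) (α : List A) (a : A) : ¬ P α (dm a) u → Unw dm P u (a :: α) α
  | wsc (u : D) {α β : List A} (a : A) :
      Unw dm P u α β → Unw dm P (dm a) α β → Unw dm P u (a :: α) (a :: β)

/-- The prohibitive purge function `ta^□`, whose condition is distributed knowledge
of the policy edge, interpreted over the Kripke structure given by the unwinding relations. -/
noncomputable def taB {D A : Type} (dm : A → D) (P : List A → D → D → Prop) :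
    List A → D → TATree A
  | [], _ => TATree.eps
  | a :: α, u =>
    if (∀ β, Unw dm P u α β → Unw dm P (dm a) α β → P β (dm a) u) then
      TATree.node (taB dm P α u) (taB dm P α (dm a)) a
    else taB dm P α u

/-- The dynamic reference monitor conditions DRM-1 … DRM-6 for the unfolding of a system
(states are traces, the step function conses actions, observations are inherited). -/
def DRMunfold {D A S Out Obj Val : Type} (dm : A → D) (P : List A → D → D → Prop)
    (step : S → A → S) (s0 : S) (obs : D → S → Out)
    (contents : Obj → List A → Val) (observe alter : D → List A → Set Obj) : Prop :=
  -- DRM-1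
  (∀ u (α β : List A), (∀ o ∈ observe u α, contents o α = contents o β) →
      obs u (runL step s0 α) = obs u (runL step s0 β)) ∧
  -- DRM-2
  (∀ (a : A) (α β : List A) (o : Obj), o ∈ alter (dm a) α → o ∈ alter (dm a) β →
      (∀ o' ∈ observe (dm a) α, contents o' α = contents o' β) →
      contents o α = contents o β → contents o (a :: α) = contents o (a :: β)) ∧
  -- DRM-3
  (∀ (a : A) (α : List A) (o : Obj), contents o (a :: α) ≠ contents o α → o ∈ alter (dm a) α) ∧
  -- DRM-4
  (∀ u (α : List A) (a : A), observe u (a :: α) \ observe u α ⊆ observe (dm a) α) ∧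
  -- DRM-5
  (∀ u v (α β : List A), P α v u → P β v u →
      (∀ o ∈ observe u α, contents o α = contents o β) →
      (∀ o ∈ observe v α, contents o α = contents o β) →
      observe u α ∩ alter v α = observe u β ∩ alter v β) ∧
  -- DRM-6
  (∀ u v (α : List A), (alter u α ∩ observe v α).Nonempty → P α u v)

section Aux

variable {D A : Type}

/-- The witnessing contents function: data objects hold the permissive purge,
`oset` objects hold (an encoding of) the observe set. -/
noncomputable def cnt (dm : A → D) (Q : List A → D → D → Prop) :
    D ⊕ D → List A → TATree A ⊕ Set (D ⊕ D)
  | .inl u, α => .inl (taD dm Q α u)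
  | .inr u, _ => .inr {Sum.inl u, Sum.inr u}

/-- The witnessing observe sets: `u` observes its data object and its oset object. -/
def obv (u : D) : Set (D ⊕ D) := {Sum.inl u, Sum.inr u}

/-- The witnessing alter sets: `v` may alter the data object of `w` when `v ↣ w`. -/
def alt (Q : List A → D → D → Prop) (v : D) (α : List A) : Set (D ⊕ D) :=
  {x | ∃ w, x = Sum.inl w ∧ Q α v w}

lemma obv_inter_alt {Q : List A → D → D → Prop} {u v : D} {α : List A} (h : Q α v u) :
    obv u ∩ alt Q v α = {Sum.inl u} := by
  ext x
  constructor
  · rintro ⟨hx, w, rfl, hq⟩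
    rcases hx with h1 | h1
    · exact h1
    · exact absurd h1 (by simp)
  · rintro rfl
    exact ⟨Or.inl rfl, u, rfl, h⟩

lemma obv_inter_alt_empty {Q : List A → D → D → Prop} {u v : D} {α : List A} (h : ¬ Q α v u) :
    obv u ∩ alt Q v α = ∅ := by
  ext x
  simp only [Set.mem_inter_iff, Set.mem_empty_iff_false, iff_false, not_and]
  rintro (rfl | rfl) ⟨w, hw, hq⟩
  · cases hw; exact h hq
  · cases hw

/-- The witnessing interpretation satisfies DRM-1 … DRM-6 for any policy `Q`,
given `ta^◇`-security with respect to `Q`. -/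
lemma drm_generic {S Out : Type} (dm : A → D) (Q : List A → D → D → Prop)
    (step : S → A → S) (s0 : S) (obs : D → S → Out)
    (hsec : ∀ u (α β : List A), taD dm Q α u = taD dm Q β u →
      obs u (runL step s0 α) = obs u (runL step s0 β)) :
    DRMunfold dm Q step s0 obs (cnt dm Q) (fun u _ => obv u) (alt Q) := by
  refine ⟨?_, ?_, ?_, ?_, ?_, ?_⟩
  · -- DRM-1
    intro u α β h
    apply hsec
    have := h (Sum.inl u) (Or.inl rfl)
    simpa [cnt] using this
  · -- DRM-2
    rintro a α β o ⟨w, rfl, hqa⟩ ⟨w', hw', hqb⟩ hobs hco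
    cases hw'
    have h1 : taD dm Q α (dm a) = taD dm Q β (dm a) := by
      simpa [cnt] using hobs (Sum.inl (dm a)) (Or.inl rfl)
    have h2 : taD dm Q α w = taD dm Q β w := by simpa [cnt] using hco
    simp [cnt, taD, if_pos hqa, if_pos hqb, h1, h2]
  · -- DRM-3
    intro a α o h
    cases o with
    | inl w =>
      by_contra hc
      have hq : ¬ Q α (dm a) w := fun hq => hc ⟨w, rfl, hq⟩
      exact h (by simp [cnt, taD, if_neg hq])
    | inr u => exact absurd rfl h
  · -- DRM-4
    intro u α a x hx
    exact absurd hx.1 hx.2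
  · -- DRM-5
    intro u v α β h1 h2 _ _
    rw [obv_inter_alt h1, obv_inter_alt h2]
  · -- DRM-6
    rintro u v α ⟨x, ⟨w, rfl, hq⟩, hx2⟩
    rcases hx2 with h | h
    · cases h; exact hq
    · exact absurd h (by simp)

/-- The local refinement of a policy: distributed knowledge of the edge. -/
def Ppr (dm : A → D) (P : List A → D → D → Prop) (α : List A) (u v : D) : Prop :=
  ∀ β, Unw dm P v α β → Unw dm P u α β → P β u v

lemma taD_Ppr_eq_taB (dm : A → D) (P : List A → D → D → Prop) :
    ∀ (α : List A) (u : D), taD dm (Ppr dm P) α u = taB dm P α u := by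
  intro α
  induction α with
  | nil => intro u; rfl
  | cons a α ih =>
    intro u
    by_cases hc : ∀ β, Unw dm P u α β → Unw dm P (dm a) α β → P β (dm a) u
    · rw [taD, taB]
      simp only [Ppr]
      simp only [if_pos hc, ih]
    · rw [taD, taB]
      simp only [Ppr]
      simp only [if_neg hc, ih]

lemma unw_cons_of_not {dm : A → D} {P : List A → D → D → Prop} {u : D} {α : List A} {a : A}
    (h : ¬ ∀ β, Unw dm P u α β → Unw dm P (dm a) α β → P β (dm a) u) :
    Unw dm P u (a :: α) α := by
  push_neg at h
  obtain ⟨γ, hu, hd, hnp⟩ := h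
  exact .trans (.trans (.wsc u a hu hd) (.dlr u γ a hnp)) (.symm hu)

/-- Soundness of the prohibitive purge with respect to the unwinding relations. -/
lemma taB_unw (dm : A → D) (P : List A → D → D → Prop) :
    ∀ (n : ℕ) (u : D) (α β : List A), α.length + β.length ≤ n →
      taB dm P α u = taB dm P β u → Unw dm P u α β := by
  intro n
  induction n with
  | zero =>
    intro u α β hlen _
    obtain ⟨rfl, rfl⟩ : α = [] ∧ β = [] := by
      constructor <;> [skip; skip] <;>
        simp_all [List.length_eq_zero_iff, Nat.add_eq_zero]
    exact .refl u []
  | succ n ih =>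
    intro u α β hlen h
    match α, β with
    | [], [] => exact .refl u []
    | [], b :: β' =>
      by_cases hc : ∀ γ, Unw dm P u β' γ → Unw dm P (dm b) β' γ → P γ (dm b) u
      · simp only [taB, if_pos hc] at h
        exact absurd h (by simp)
      · simp only [taB, if_neg hc] at h
        have h1 : Unw dm P u [] β' :=
          ih u [] β' (by simp at hlen ⊢; omega) h
        exact .trans h1 (.symm (unw_cons_of_not hc))
    | a :: α', [] =>
      by_cases hc : ∀ γ, Unw dm P u α' γ → Unw dm P (dm a) α' γ → P γ (dm a) u
      · simp only [taB, if_pos hc] at h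
        exact absurd h (by simp)
      · simp only [taB, if_neg hc] at h
        have h1 : Unw dm P u α' [] :=
          ih u α' [] (by simp at hlen ⊢; omega) h
        exact .trans (unw_cons_of_not hc) h1
    | a :: α', b :: β' =>
      by_cases hc1 : ∀ γ, Unw dm P u α' γ → Unw dm P (dm a) α' γ → P γ (dm a) u
      · by_cases hc2 : ∀ γ, Unw dm P u β' γ → Unw dm P (dm b) β' γ → P γ (dm b) u
        · simp only [taB, if_pos hc1, if_pos hc2] at h
          injection h with h1 h2 h3
          subst h3
          have hu : Unw dm P u α' β' :=
            ih u α' β' (by simp at hlen ⊢; omega) h1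
          have hd : Unw dm P (dm a) α' β' :=
            ih (dm a) α' β' (by simp at hlen ⊢; omega) h2
          exact .wsc u a hu hd
        · rw [show taB dm P (b :: β') u = taB dm P β' u by simp only [taB, if_neg hc2]] at h
          have h1 : Unw dm P u (a :: α') β' :=
            ih u (a :: α') β' (by simp at hlen ⊢; omega) h
          exact .trans h1 (.symm (unw_cons_of_not hc2))
      · rw [show taB dm P (a :: α') u = taB dm P α' u by simp only [taB, if_neg hc1]] at h
        have h1 : Unw dm P u α' (b :: β') :=
          ih u α' (b :: β') (by simp at hlen ⊢; omega) h
        exact .trans (unw_cons_of_not hc1) h1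

/-- `Ppr` edges transfer along unwinding-equivalent traces. -/
lemma Ppr_iff {dm : A → D} {P : List A → D → D → Prop} {u v : D} {α β : List A}
    (hu : Unw dm P u α β) (hv : Unw dm P v α β) :
    Ppr dm P α u v ↔ Ppr dm P β u v := by
  constructor
  · intro h γ h1 h2
    exact h γ (.trans hv h1) (.trans hu h2)
  · intro h γ h1 h2
    exact h γ (.trans (.symm hv) h1) (.trans (.symm hu) h2)

end Aux

/-- access control completeness: a `ta^◇`-secure system's unfolding admits an
access control interpretation satisfying DRM-1 … DRM-6; a `ta^□`-secure system's unfolding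
admits one, consistent with some local more-restrictive policy, that also satisfies DRM-5'. -/
theorem statement_19 {D A S Out : Type} (dm : A → D) (P : List A → D → D → Prop)
    (hrefl : ∀ α u, P α u u)
    (step : S → A → S) (s0 : S) (obs : D → S → Out) :
    ((∀ u (α β : List A), taD dm P α u = taD dm P β u →
        obs u (runL step s0 α) = obs u (runL step s0 β)) →
      ∃ (Obj Val : Type) (contents : Obj → List A → Val)
        (observe alter : D → List A → Set Obj) (oset : D → Obj) (osetVal : Set Obj → Val),
        Function.Injective osetVal ∧
        (∀ u (α : List A), contents (oset u) α = osetVal (observe u α)) ∧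
        (∀ u (α : List A), oset u ∈ observe u α) ∧
        DRMunfold dm P step s0 obs contents observe alter) ∧
    ((∀ u (α β : List A), Unw dm P u α β →
        obs u (runL step s0 α) = obs u (runL step s0 β)) →
      ∃ P' : List A → D → D → Prop,
        (∀ (α : List A) u v, P' α u v → P α u v) ∧
        (∀ u v (α β : List A), taD dm P' α u = taD dm P' β u →
            taD dm P' α v = taD dm P' β v → (P' α u v ↔ P' β u v)) ∧
        ∃ (Obj Val : Type) (contents : Obj → List A → Val)
          (observe alter : D → List A → Set Obj) (oset : D → Obj) (osetVal : Set Obj → Val),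
          Function.Injective osetVal ∧
          (∀ u (α : List A), contents (oset u) α = osetVal (observe u α)) ∧
          (∀ u (α : List A), oset u ∈ observe u α) ∧
          DRMunfold dm P' step s0 obs contents observe alter ∧
          (∀ u v (α β : List A),
            (∀ o ∈ observe u α, contents o α = contents o β) →
            (∀ o ∈ observe v α, contents o α = contents o β) →
            observe u α ∩ alter v α = observe u β ∩ alter v β)) := by
  constructor
  · -- Part 1: ta^◇-security
    intro hsec
    exact ⟨D ⊕ D, TATree A ⊕ Set (D ⊕ D), cnt dm P, fun u _ => obv u, alt P,
      Sum.inr, Sum.inr, fun x y h => Sum.inr.inj h,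
      fun u α => rfl, fun u α => Or.inr rfl,
      drm_generic dm P step s0 obs hsec⟩
  · -- Part 2: ta^□-security
    intro hsec
    -- key consequence: taB-equality implies unwinding-equivalence, hence security for Ppr
    have key : ∀ u (α β : List A), taD dm (Ppr dm P) α u = taD dm (Ppr dm P) β u →
        Unw dm P u α β := by
      intro u α β h
      rw [taD_Ppr_eq_taB, taD_Ppr_eq_taB] at h
      exact taB_unw dm P (α.length + β.length) u α β le_rfl h
    have hsec' : ∀ u (α β : List A), taD dm (Ppr dm P) α u = taD dm (Ppr dm P) β u →
        obs u (runL step s0 α) = obs u (runL step s0 β) :=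
      fun u α β h => hsec u α β (key u α β h)
    refine ⟨Ppr dm P, ?_, ?_, D ⊕ D, TATree A ⊕ Set (D ⊕ D), cnt dm (Ppr dm P),
      fun u _ => obv u, alt (Ppr dm P),
      Sum.inr, Sum.inr, fun x y h => Sum.inr.inj h,
      fun u α => rfl, fun u α => Or.inr rfl,
      drm_generic dm (Ppr dm P) step s0 obs hsec', ?_⟩
    · -- Ppr refines P
      intro α u v h
      exact h α (.refl v α) (.refl u α)
    · -- locality
      intro u v α β h1 h2
      exact Ppr_iff (key u α β h1) (key v α β h2)
    · -- DRM-5'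
      intro u v α β h1 h2
      have hu : Unw dm P u α β := by
        apply key
        simpa [cnt] using h1 (Sum.inl u) (Or.inl rfl)
      have hv : Unw dm P v α β := by
        apply key
        simpa [cnt] using h2 (Sum.inl v) (Or.inl rfl)
      by_cases hq : Ppr dm P α v u
      · rw [obv_inter_alt hq, obv_inter_alt ((Ppr_iff hv hu).mp hq)]
      · rw [obv_inter_alt_empty hq,
          obv_inter_alt_empty (fun hq' => hq ((Ppr_iff hv hu).mpr hq'))]
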